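/- Let A be a dually integral po-semiring, viewed as an A-module over itself with action given by multiplication. Then A is cyclic (generated by 1) and onto-projective in the category of A-modules: for any morphisms f : S → T with f onto and g : A → T, there is a morphism h : A → S with f ∘ h = g. -/

import Mathlib

/-- A module over a dually integral po-semiring `A`. -/
structure PoModule (A : Type*) (R : Type*) [Semiring A] [PartialOrder A] [IsOrderedRing A]
    [AddCommMonoid R] [PartialOrder R] [IsOrderedAddMonoid R] where
  smul : A → R → R
  mul_smul : ∀ (σ π : A) (a : R), smul (σ * π) a = smul σ (smul π a)
  one_smul : ∀ a : R, smul 1 a = a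
  zero_smul : ∀ a : R, smul 0 a = 0
  smul_add : ∀ (σ : A) (a b : R), smul σ (a + b) = smul σ a + smul σ b
  add_smul : ∀ (σ π : A) (a : R), smul (σ + π) a = smul σ a + smul π a
  smul_mono_left : ∀ (σ π : A) (a : R), σ ≤ π → smul σ a ≤ smul π a
  smul_mono_right : ∀ (σ : A) (a b : R), a ≤ b → smul σ a ≤ smul σ b

/-- Morphisms of `A`-modules. -/
def IsModMor {A R S : Type*} [Semiring A] [PartialOrder A] [IsOrderedRing A]
    [AddCommMonoid R] [PartialOrder R] [IsOrderedAddMonoid R]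
    [AddCommMonoid S] [PartialOrder S] [IsOrderedAddMonoid S] (MR : PoModule A R) (MS : PoModule A S)
    (f : R → S) : Prop :=
  (∀ a b : R, a ≤ b → f a ≤ f b) ∧ (f 0 = 0) ∧
  (∀ a b : R, f (a + b) = f a + f b) ∧
  (∀ (σ : A) (a : R), f (MR.smul σ a) = MS.smul σ (f a))

/-- A dually integral po-semiring `A`, viewed as a module over itself with the action
given by multiplication. -/
def selfModule (A : Type*) [Semiring A] [PartialOrder A] [IsOrderedRing A] (hbot : ∀ σ : A, (0 : A) ≤ σ) :
    PoModule A A where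
  smul := (· * ·)
  mul_smul := mul_assoc
  one_smul := one_mul
  zero_smul := zero_mul
  smul_add := mul_add
  add_smul := add_mul
  smul_mono_left := fun _ _ a h => mul_le_mul_of_nonneg_right h (hbot a)
  smul_mono_right := fun σ _ _ h => mul_le_mul_of_nonneg_left h (hbot σ)

/-- A dually integral po-semiring, as a module over itself, is cyclic (generated by
`1`) and onto-projective in the category of `A`-modules. -/
theorem posemiring_self_module_cyclic_and_projective
    (A : Type*) [Semiring A] [PartialOrder A] [IsOrderedRing A] (hbot : ∀ σ : A, (0 : A) ≤ σ) :
    -- cyclic, generated by 1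
    (∀ x : A, ∃ σ : A, (selfModule A hbot).smul σ 1 = x) ∧
    -- onto-projective
    (∀ (S : Type*) (T : Type*), ∀ (_ : AddCommMonoid S) (_ : PartialOrder S) (_ : IsOrderedAddMonoid S)
      (_ : AddCommMonoid T) (_ : PartialOrder T) (_ : IsOrderedAddMonoid T), ∀ (MS : PoModule A S) (MT : PoModule A T)
      (f : S → T) (g : A → T),
      IsModMor MS MT f → Function.Surjective f →
      IsModMor (selfModule A hbot) MT g →
      ∃ h : A → S, IsModMor (selfModule A hbot) MS h ∧ f ∘ h = g) := by
  constructor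
  · exact fun x => ⟨x, mul_one x⟩
  · intro S T _ _ _ _ _ _ MS MT f g hf hsurj hg
    obtain ⟨s, hs⟩ := hsurj (g 1)
    refine ⟨fun σ => MS.smul σ s, ⟨fun a b h => MS.smul_mono_left a b s h,
      MS.zero_smul s, fun a b => MS.add_smul a b s, fun σ a => MS.mul_smul σ a s⟩, ?_⟩
    funext σ
    have := hg.2.2.2 σ 1
    simp only [selfModule, Function.comp] at this ⊢
    rw [hf.2.2.2, hs, ← this, mul_one]
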